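/- Let V and W be Banach spaces, T : V → W a Fredholm operator, and K : V → W a compact linear operator. Then T + K is Fredholm and has the same index as T. -/

import Mathlib

open Module

variable {V W : Type*} [NormedAddCommGroup V] [NormedSpace ℝ V]
  [NormedAddCommGroup W] [NormedSpace ℝ W]

/-- A bounded linear operator between Banach spaces is Fredholm if its kernel is
finite dimensional, its range is closed, and its cokernel is finite dimensional. -/
def IsFredholm (T : V →L[ℝ] W) : Prop :=
  FiniteDimensional ℝ (LinearMap.ker (T : V →ₗ[ℝ] W)) ∧
  IsClosed (LinearMap.range (T : V →ₗ[ℝ] W) : Set W) ∧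
  FiniteDimensional ℝ (W ⧸ LinearMap.range (T : V →ₗ[ℝ] W))

/-- The Fredholm index: dim ker T − dim coker T. -/
noncomputable def fredholmIndex (T : V →L[ℝ] W) : ℤ :=
  (finrank ℝ (LinearMap.ker (T : V →ₗ[ℝ] W)) : ℤ) - (finrank ℝ (W ⧸ LinearMap.range (T : V →ₗ[ℝ] W)) : ℤ)


section AuxiliaryFredholmLemmas

open Submodule LinearMap

section Helpers


variable {M : Type*} [AddCommGroup M] [Module ℝ M]

/-- Extension lemma: finite-dimensional submodule and quotient imply finite-dimensional. -/
theorem fd_of_submodule_quotient (p : Submodule ℝ M) [FiniteDimensional ℝ p]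
    [FiniteDimensional ℝ (M ⧸ p)] : FiniteDimensional ℝ M := by
  haveI : IsNoetherian ℝ p := IsNoetherian.iff_fg.2 ‹_›
  haveI : IsNoetherian ℝ (M ⧸ p) := IsNoetherian.iff_fg.2 ‹_›
  haveI : IsNoetherian ℝ M := (isNoetherian_iff_submodule_quotient p).mpr ⟨‹_›, ‹_›⟩
  exact IsNoetherian.iff_fg.1 ‹_›

/-- Quotient by a bigger submodule of a finite-codimensional one is finite dimensional. -/
theorem fd_quotient_of_le {A B : Submodule ℝ M} (h : A ≤ B) [FiniteDimensional ℝ (M ⧸ A)] :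
    FiniteDimensional ℝ (M ⧸ B) := by
  have hsurj : Function.Surjective (Submodule.mapQ A B LinearMap.id (fun x hx => h hx)) := by
    intro y
    obtain ⟨x, rfl⟩ := Submodule.mkQ_surjective B y
    exact ⟨Submodule.Quotient.mk x, rfl⟩
  exact Module.Finite.of_surjective _ hsurj

end Helpers

section NormedHelpers

variable {E : Type*} [NormedAddCommGroup E] [NormedSpace ℝ E]

/-- A submodule containing a closed finite-codimensional submodule is closed and
finite-codimensional. -/
theorem closed_fincodim_of_le {A B : Submodule ℝ E} (hBA : B ≤ A)
    (hB : IsClosed (B : Set E)) [FiniteDimensional ℝ (E ⧸ B)] :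
    IsClosed (A : Set E) ∧ FiniteDimensional ℝ (E ⧸ A) := by
  haveI : IsClosed (B : Set E) := hB
  refine ⟨?_, fd_quotient_of_le hBA⟩
  have hq : Continuous B.mkQ :=
    AddMonoidHomClass.continuous_of_bound B.mkQ 1 (fun x => by
      simpa using Submodule.Quotient.norm_mk_le B x)
  have : (A : Set E) = B.mkQ ⁻¹' (A.map B.mkQ : Set (E ⧸ B)) := by
    ext x
    simp only [Set.mem_preimage, SetLike.mem_coe, Submodule.mem_map]
    constructor
    · intro hx; exact ⟨x, hx, rfl⟩
    · rintro ⟨a, ha, hax⟩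
      have : x - a ∈ B := by
        rw [← Submodule.Quotient.eq]
        exact hax.symm
      simpa using A.add_mem (hBA this) ha
  rw [this]
  exact (Submodule.closed_of_finiteDimensional (A.map B.mkQ)).preimage hq

/-- A continuous linear map with finite-dimensional range is a compact operator. -/
theorem isCompactOperator_of_fd_range {F : Type*} [NormedAddCommGroup F] [NormedSpace ℝ F]
    (f : E →L[ℝ] F) [FiniteDimensional ℝ (f.range)] : IsCompactOperator ⇑f := by
  set R := f.range
  set g : E →L[ℝ] R := f.codRestrict R (fun x => LinearMap.mem_range_self _ x)
  refine ⟨Subtype.val '' Metric.closedBall (0 : R) ‖g‖, ?_, ?_⟩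
  · exact ((ProperSpace.isCompact_closedBall (0 : R) ‖g‖)).image continuous_subtype_val
  · have : Metric.closedBall (0 : E) 1 ⊆ ⇑f ⁻¹' (Subtype.val '' Metric.closedBall (0 : R) ‖g‖) := by
      intro x hx
      simp only [Metric.mem_closedBall, dist_zero_right] at hx
      refine Set.mem_preimage.2 ⟨g x, ?_, rfl⟩
      simp only [Metric.mem_closedBall, dist_zero_right]
      calc ‖g x‖ ≤ ‖g‖ * ‖x‖ := g.le_opNorm x
        _ ≤ ‖g‖ * 1 := by
            exact mul_le_mul_of_nonneg_left hx (norm_nonneg g)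
        _ = ‖g‖ := mul_one _
    exact Filter.mem_of_superset (Metric.closedBall_mem_nhds 0 one_pos) this

/-- Riesz-style lemma: a unit vector in `G` at distance `≥ 1/2` from the closed
subspace `F`. -/
theorem riesz_unit_vector {F G : Submodule ℝ E} (hF : IsClosed (F : Set E))
    (x₀ : E) (hx₀G : x₀ ∈ G) (hx₀F : x₀ ∉ F) (hFG : F ≤ G) :
    ∃ x : E, x ∈ G ∧ ‖x‖ = 1 ∧ ∀ y ∈ F, (1:ℝ)/2 ≤ ‖x - y‖ := by
  set F' : Submodule ℝ G := F.comap G.subtype with hF'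
  have hF'c : IsClosed (F' : Set G) := by
    have : (F' : Set G) = Subtype.val ⁻¹' (F : Set E) := rfl
    rw [this]
    exact hF.preimage continuous_subtype_val
  have hex : ∃ v : G, v ∉ F' := ⟨⟨x₀, hx₀G⟩, by simpa [hF'] using hx₀F⟩
  obtain ⟨v, hvF', hv⟩ := riesz_lemma (𝕜 := ℝ) hF'c hex (r := 1/2) (by norm_num)
  have hvne : (v : E) ≠ 0 := by
    intro h
    apply hvF'
    have : v = 0 := Subtype.ext h
    rw [this]; exact Submodule.zero_mem _
  have hnorm : ‖(v : E)‖ ≠ 0 := norm_ne_zero_iff.2 hvne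
  refine ⟨‖(v:E)‖⁻¹ • (v : E), Submodule.smul_mem _ _ v.2, ?_, ?_⟩
  · rw [norm_smul, norm_inv, norm_norm, inv_mul_cancel₀ hnorm]
  · intro y hy
    set w : G := ⟨‖(v:E)‖ • y, hFG (Submodule.smul_mem _ _ hy)⟩ with hw
    have hyF' : w ∈ F' := by
      simpa [hF', hw] using Submodule.smul_mem F (‖(v:E)‖) hy
    have key : 1/2 * ‖(v:E)‖ ≤ ‖(v:E) - ‖(v:E)‖ • y‖ := hv _ hyF'
    have hexp : ‖‖(v:E)‖⁻¹ • (v : E) - y‖ = ‖(v:E)‖⁻¹ * ‖(v:E) - ‖(v:E)‖ • y‖ := by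
      rw [show ‖(v:E)‖⁻¹ • (v:E) - y = ‖(v:E)‖⁻¹ • ((v:E) - ‖(v:E)‖ • y) by
            rw [smul_sub, smul_smul, inv_mul_cancel₀ hnorm, one_smul],
          norm_smul, norm_inv, norm_norm]
    rw [hexp]
    calc (1:ℝ)/2 = ‖(v:E)‖⁻¹ * (1/2 * ‖(v:E)‖) := by
          field_simp
      _ ≤ ‖(v:E)‖⁻¹ * ‖(v:E) - ‖(v:E)‖ • y‖ := by
          apply mul_le_mul_of_nonneg_left key (by positivity)

end NormedHelpers



section RieszTheory

open Submodule



variable {X : Type*} [NormedAddCommGroup X] [NormedSpace ℝ X]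

/-- No sequence of unit vectors has `1/2`-separated images under a compact operator. -/
theorem compact_no_separated_seq (C : X →L[ℝ] X) (hC : IsCompactOperator ⇑C)
    (u : ℕ → X) (hu : ∀ n, ‖u n‖ = 1)
    (hsep : ∀ m n, m < n → (1:ℝ)/2 ≤ ‖C (u n) - C (u m)‖) : False := by
  obtain ⟨M, hM, hMsub⟩ := hC.image_closedBall_subset_compact (𝕜₁ := ℝ) 1
  have humem : ∀ n, C (u n) ∈ M := by
    intro n
    apply hMsub
    exact ⟨u n, by simp [Metric.mem_closedBall, (hu n).le], rfl⟩
  obtain ⟨y, _, φ, hφ, hconv⟩ := hM.tendsto_subseq humem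
  have hcauchy := hconv.cauchySeq
  rw [Metric.cauchySeq_iff] at hcauchy
  obtain ⟨N, hN⟩ := hcauchy (1/2) (by norm_num)
  have h1 := hN (N + 1) (by omega) N (by omega)
  have h2 := hsep (φ N) (φ (N + 1)) (hφ (by omega))
  rw [dist_eq_norm] at h1
  simp only [Function.comp_apply] at h1
  linarith

variable [CompleteSpace X]

/-- Riesz theory: `1 + C` has finite-dimensional kernel. -/
theorem riesz_ker_fd (C : X →L[ℝ] X) (hC : IsCompactOperator ⇑C) :
    FiniteDimensional ℝ ((1 + C).ker) := by
  set S : X →L[ℝ] X := 1 + C with hS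
  obtain ⟨M, hM, hMsub⟩ := hC.image_closedBall_subset_compact (𝕜₁ := ℝ) 1
  set B : Set X := (S.ker : Set X) ∩ Metric.closedBall 0 1 with hB
  have hBclosed : IsClosed B :=
    (ContinuousLinearMap.isClosed_ker S).inter Metric.isClosed_closedBall
  have hBsub : B ⊆ (fun y => -y) '' M := by
    rintro x ⟨hx1, hx2⟩
    have hx0 : S x = 0 := hx1
    have hxc : C x = -x := by
      have h : x + C x = 0 := by
        simpa [hS, ContinuousLinearMap.add_apply, ContinuousLinearMap.one_apply] using hx0
      exact eq_neg_of_add_eq_zero_right h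
    exact ⟨C x, hMsub ⟨x, hx2, rfl⟩, by rw [hxc]; exact neg_neg x⟩
  have hBcompact : IsCompact B :=
    ((hM.image (continuous_neg))).of_isClosed_subset hBclosed hBsub
  apply FiniteDimensional.of_isCompact_closedBall₀ (𝕜 := ℝ) (one_pos)
  rw [Subtype.isCompact_iff]
  have himg : Subtype.val '' (Metric.closedBall (0 : S.ker) 1) = B := by
    ext x
    constructor
    · rintro ⟨⟨x, hx⟩, hball, rfl⟩
      refine ⟨hx, ?_⟩
      simpa [Metric.mem_closedBall, dist_zero_right] using hball
    · rintro ⟨hx1, hx2⟩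
      refine ⟨⟨x, hx1⟩, ?_, rfl⟩
      simpa [Metric.mem_closedBall, dist_zero_right] using hx2
  rw [himg]
  exact hBcompact

/-- Riesz theory: `1 + C` has closed range. -/
theorem riesz_range_closed (C : X →L[ℝ] X) (hC : IsCompactOperator ⇑C) :
    IsClosed (((1 + C).range : Submodule ℝ X) : Set X) := by
  set S : X →L[ℝ] X := 1 + C with hS
  have hSapp : ∀ x, S x = x + C x := fun x => by
    simp [hS, ContinuousLinearMap.add_apply, ContinuousLinearMap.one_apply]
  haveI : FiniteDimensional ℝ (S.ker) := riesz_ker_fd C hC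
  obtain ⟨π, hπ⟩ := Submodule.ClosedComplemented.of_finiteDimensional (S.ker)
  set N : Submodule ℝ X := π.ker with hN
  have hNclosed : IsClosed (N : Set X) := ContinuousLinearMap.isClosed_ker π
  -- N is a complement of ker S
  have hdisj : ∀ x, x ∈ S.ker → x ∈ N → x = 0 := by
    intro x hxS hxN
    have h1 : π x = ⟨x, hxS⟩ := hπ ⟨x, hxS⟩
    have h2 : π x = 0 := hxN
    have := h1.symm.trans h2
    exact congrArg Subtype.val this
  have hsup : ∀ x : X, ∃ k ∈ S.ker, ∃ n ∈ N, x = k + n := by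
    intro x
    refine ⟨(π x : X), (π x).2, x - (π x : X), ?_, by abel⟩
    have : π (x - (π x : X)) = π x - π ((π x : X)) := map_sub π x _
    have h2 : π ((π x : X)) = π x := hπ (π x)
    show π (x - (π x : X)) = 0
    rw [this, h2, sub_self]
  -- S is bounded below on N
  have hbdd : ∃ c > (0:ℝ), ∀ x ∈ N, c * ‖x‖ ≤ ‖S x‖ := by
    by_contra hcon
    push_neg at hcon
    have hseq : ∀ n : ℕ, ∃ u : X, u ∈ N ∧ ‖u‖ = 1 ∧ ‖S u‖ < 1 / (n + 1) := by
      intro n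
      obtain ⟨x, hxN, hxlt⟩ := hcon (1/(n+1)) (by positivity)
      have hxne : x ≠ 0 := by
        intro h
        rw [h, map_zero, norm_zero] at hxlt
        simp only [norm_zero, mul_zero] at hxlt
        exact lt_irrefl 0 hxlt
      have hnx : ‖x‖ ≠ 0 := norm_ne_zero_iff.2 hxne
      refine ⟨‖x‖⁻¹ • x, Submodule.smul_mem _ _ hxN, ?_, ?_⟩
      · rw [norm_smul, norm_inv, norm_norm, inv_mul_cancel₀ hnx]
      · rw [map_smul, norm_smul, norm_inv, norm_norm]
        rw [inv_mul_lt_iff₀ (by positivity)]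
        exact hxlt.trans_eq (mul_comm _ _)
    choose u huN hu1 huS using hseq
    obtain ⟨M, hM, hMsub⟩ := hC.image_closedBall_subset_compact (𝕜₁ := ℝ) 1
    have humem : ∀ n, C (u n) ∈ M := fun n =>
      hMsub ⟨u n, by simp [Metric.mem_closedBall, (hu1 n).le], rfl⟩
    obtain ⟨y, _, φ, hφ, hconv⟩ := hM.tendsto_subseq humem
    have hSconv : Filter.Tendsto (fun n => S (u (φ n))) Filter.atTop (nhds 0) := by
      rw [tendsto_iff_norm_sub_tendsto_zero]
      apply squeeze_zero (fun n => by positivity) (g := fun n => 1 / (φ n + 1))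
      · intro n
        simpa using (huS (φ n)).le
      · apply tendsto_one_div_add_atTop_nhds_zero_nat.comp
        exact (Filter.tendsto_add_atTop_iff_nat 0).mpr (hφ.tendsto_atTop) |>.congr (by simp)
    have huconv : Filter.Tendsto (fun n => u (φ n)) Filter.atTop (nhds (-y)) := by
      have : ∀ n, u (φ n) = S (u (φ n)) - C (u (φ n)) := by
        intro n; rw [hSapp]; abel
      rw [show (-y) = 0 - y by abel]
      exact Filter.Tendsto.congr (fun n => (this n).symm) (hSconv.sub hconv)
    have hyN : -y ∈ N := hNclosed.mem_of_tendsto huconv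
      (Filter.Eventually.of_forall (fun n => huN (φ n)))
    have hySker : S (-y) = 0 := by
      have h1 : Filter.Tendsto (fun n => S (u (φ n))) Filter.atTop (nhds (S (-y))) :=
        (S.continuous.tendsto _).comp huconv
      exact tendsto_nhds_unique h1 hSconv
    have : -y = 0 := hdisj _ hySker hyN
    have hny : ‖-y‖ = 1 := by
      have := huconv.norm
      simp only [hu1] at this
      exact tendsto_nhds_unique this tendsto_const_nhds
    rw [this] at hny
    simp at hny
  obtain ⟨c, hc, hcbdd⟩ := hbdd
  -- range S = S(N), which is closed by the bound
  have hNcomplete : CompleteSpace N := hNclosed.completeSpace_coe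
  set g : N →L[ℝ] X := S.comp N.subtypeL with hg
  have hganti : AntilipschitzWith (⟨c, hc.le⟩ : NNReal)⁻¹ ⇑g := by
    apply ContinuousLinearMap.antilipschitz_of_bound
    intro x
    have hb : c * ‖x‖ ≤ ‖g x‖ := hcbdd (x : X) x.2
    show ‖x‖ ≤ c⁻¹ * ‖g x‖
    rw [inv_mul_eq_div, le_div_iff₀ hc, mul_comm]
    exact hb
  have hgrange : IsClosed (Set.range ⇑g) := hganti.isClosed_range g.uniformContinuous
  have : (S.range : Set X) = Set.range ⇑g := by
    ext y
    constructor
    · rintro ⟨x, rfl⟩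
      obtain ⟨k, hk, n, hn, rfl⟩ := hsup x
      refine ⟨⟨n, hn⟩, ?_⟩
      simp only [hg, ContinuousLinearMap.comp_apply, Submodule.subtypeL_apply]
      rw [map_add]
      have : (S : X →ₗ[ℝ] X) k = 0 := hk
      rw [this, zero_add]; rfl
    · rintro ⟨⟨x, hx⟩, rfl⟩
      exact ⟨x, rfl⟩
  rw [this]
  exact hgrange




set_option maxHeartbeats 1000000 in
/-- Riesz theory: cokernel of `1 + C` is finite dimensional and the index is zero. -/
theorem riesz_coker (C : X →L[ℝ] X) (hC : IsCompactOperator ⇑C) :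
    FiniteDimensional ℝ (X ⧸ (1 + C).range) ∧
      finrank ℝ ((1 + C).ker) = finrank ℝ (X ⧸ (1 + C).range) := by
  set S : X →L[ℝ] X := 1 + C with hSdef
  -- powers of S are 1 + compact
  have hpow : ∀ n : ℕ, ∃ Cn : X →L[ℝ] X, IsCompactOperator ⇑Cn ∧ S ^ n = 1 + Cn := by
    intro n
    induction n with
    | zero => exact ⟨0, isCompactOperator_zero, by simp⟩
    | succ n ih =>
      obtain ⟨Cn, hCn, hSn⟩ := ih
      refine ⟨C + Cn + Cn * C, ?_, ?_⟩
      · have h1 : IsCompactOperator ⇑(Cn * C) := by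
          have : ⇑(Cn * C) = ⇑Cn ∘ ⇑C := rfl
          rw [this]
          exact hC.continuous_comp Cn.continuous
        have h2 : ⇑(C + Cn + Cn * C) = ⇑C + ⇑Cn + ⇑(Cn * C) := by
          ext x; simp [ContinuousLinearMap.add_apply]
        rw [h2]
        exact (hC.add hCn).add h1
      · rw [pow_succ, hSn, hSdef]
        noncomm_ring
  have kerfd : ∀ n : ℕ, FiniteDimensional ℝ ((S ^ n).ker) := by
    intro n; obtain ⟨Cn, hCn, hSn⟩ := hpow n; rw [hSn]; exact riesz_ker_fd Cn hCn
  have rclosed : ∀ n : ℕ, IsClosed (((S ^ n).range : Submodule ℝ X) : Set X) := by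
    intro n; obtain ⟨Cn, hCn, hSn⟩ := hpow n; rw [hSn]; exact riesz_range_closed Cn hCn
  have kclosed : ∀ n : ℕ, IsClosed (((S ^ n).ker : Submodule ℝ X) : Set X) :=
    fun n => ContinuousLinearMap.isClosed_ker (S ^ n)
  -- monotonicity
  have kmono : ∀ m n : ℕ, m ≤ n → (S ^ m).ker ≤ (S ^ n).ker := by
    intro m n h
    obtain ⟨k, rfl⟩ := Nat.exists_eq_add_of_le h
    intro x hx
    have hx' : (S ^ m) x = 0 := hx
    show (S ^ (m + k)) x = 0
    rw [add_comm, pow_add, ContinuousLinearMap.mul_apply, hx', map_zero]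
  have rmono : ∀ m n : ℕ, m ≤ n → (S ^ n).range ≤ (S ^ m).range := by
    intro m n h
    obtain ⟨k, rfl⟩ := Nat.exists_eq_add_of_le h
    rintro y ⟨x, rfl⟩
    exact ⟨(S ^ k) x, by simp only [ContinuousLinearMap.coe_coe]; rw [← ContinuousLinearMap.mul_apply, ← pow_add]⟩
  have hCapp : ∀ x, C x = S x - x := by
    intro x; rw [hSdef]; simp [ContinuousLinearMap.add_apply]
  -- kernels stabilize
  have hka : ∃ n : ℕ, ∀ m : ℕ, n ≤ m → (S ^ m).ker = (S ^ n).ker := by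
    have hstep : ∃ n : ℕ, (S ^ (n + 1)).ker = (S ^ n).ker := by
      by_contra hcon
      push_neg at hcon
      have hx : ∀ n : ℕ, ∃ x : X, x ∈ (S ^ (n+1)).ker ∧ ‖x‖ = 1 ∧
          ∀ y ∈ (S ^ n).ker, (1:ℝ)/2 ≤ ‖x - y‖ := by
        intro n
        have hlt : (S ^ n).ker < (S ^ (n+1)).ker :=
          lt_of_le_of_ne (kmono n (n+1) (by omega)) (Ne.symm (hcon n))
        obtain ⟨x₀, hx₀G, hx₀F⟩ := SetLike.exists_of_lt hlt
        obtain ⟨x, h1, h2, h3⟩ := riesz_unit_vector (kclosed n) x₀ hx₀G hx₀F hlt.le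
        exact ⟨x, h1, h2, h3⟩
      choose u hu1 hu2 hu3 using hx
      refine compact_no_separated_seq C hC u hu2 ?_
      intro m n hmn
      have hz : S (u n) - S (u m) + u m ∈ (S ^ n).ker := by
        have h1 : S (u n) ∈ (S ^ n).ker := by
          show (S ^ n) (S (u n)) = 0
          rw [← ContinuousLinearMap.mul_apply, ← pow_succ]
          exact hu1 n
        have h2 : S (u m) ∈ (S ^ n).ker := by
          apply kmono m n hmn.le
          show (S ^ m) (S (u m)) = 0
          rw [← ContinuousLinearMap.mul_apply, ← pow_succ]
          exact hu1 m
        have h3 : u m ∈ (S ^ n).ker := kmono (m+1) n (by omega) (hu1 m)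
        exact add_mem (sub_mem h1 h2) h3
      have hcalc : C (u n) - C (u m) = (S (u n) - S (u m) + u m) - u n := by
        rw [hCapp, hCapp]; abel
      rw [hcalc, ← norm_sub_rev]
      exact hu3 n _ hz
    obtain ⟨n, hn⟩ := hstep
    have hall : ∀ k : ℕ, (S ^ (n + k)).ker = (S ^ n).ker := by
      intro k
      induction k with
      | zero => rfl
      | succ k ih =>
        apply le_antisymm
        · intro x hx
          have hSx : S x ∈ (S ^ (n + k)).ker := by
            show (S ^ (n+k)) (S x) = 0
            rw [← ContinuousLinearMap.mul_apply, ← pow_succ]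
            exact hx
          rw [ih] at hSx
          have : x ∈ (S ^ (n+1)).ker := by
            show (S ^ (n+1)) x = 0
            rw [pow_succ, ContinuousLinearMap.mul_apply]
            exact hSx
          rw [hn] at this
          exact this
        · exact kmono n (n + (k+1)) (by omega)
    refine ⟨n, fun m hm => ?_⟩
    obtain ⟨k, rfl⟩ := Nat.exists_eq_add_of_le hm
    exact hall k
  -- ranges: range (S^(n+1)) = map S (range (S^n))
  have hmapr : ∀ n : ℕ, (S ^ (n+1)).range = Submodule.map (S : X →ₗ[ℝ] X) ((S ^ n).range) := by
    intro n
    ext y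
    constructor
    · rintro ⟨x, rfl⟩
      refine ⟨(S ^ n) x, ⟨x, rfl⟩, ?_⟩
      simp only [ContinuousLinearMap.coe_coe]; rw [← ContinuousLinearMap.mul_apply, ← pow_succ']
    · rintro ⟨z, ⟨x, rfl⟩, rfl⟩
      exact ⟨x, by simp only [ContinuousLinearMap.coe_coe]; rw [pow_succ', ContinuousLinearMap.mul_apply]⟩
  -- ranges stabilize
  have hra : ∃ n : ℕ, ∀ m : ℕ, n ≤ m → (S ^ m).range = (S ^ n).range := by
    have hstep : ∃ n : ℕ, (S ^ (n + 1)).range = (S ^ n).range := by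
      by_contra hcon
      push_neg at hcon
      have hx : ∀ n : ℕ, ∃ x : X, x ∈ (S ^ n).range ∧ ‖x‖ = 1 ∧
          ∀ y ∈ (S ^ (n+1)).range, (1:ℝ)/2 ≤ ‖x - y‖ := by
        intro n
        have hlt : (S ^ (n+1)).range < (S ^ n).range :=
          lt_of_le_of_ne (rmono n (n+1) (by omega)) (hcon n)
        obtain ⟨x₀, hx₀G, hx₀F⟩ := SetLike.exists_of_lt hlt
        obtain ⟨x, h1, h2, h3⟩ := riesz_unit_vector (rclosed (n+1)) x₀ hx₀G hx₀F hlt.le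
        exact ⟨x, h1, h2, h3⟩
      choose u hu1 hu2 hu3 using hx
      refine compact_no_separated_seq C hC u hu2 ?_
      intro m n hmn
      have hz : S (u m) - S (u n) + u n ∈ (S ^ (m+1)).range := by
        have h1 : S (u m) ∈ (S ^ (m+1)).range := by
          obtain ⟨w, hw⟩ := hu1 m
          exact ⟨w, by simp only [ContinuousLinearMap.coe_coe] at hw ⊢; rw [pow_succ', ContinuousLinearMap.mul_apply, hw]⟩
        have h2 : S (u n) ∈ (S ^ (m+1)).range := by
          apply rmono (m+1) (n+1) (by omega)
          obtain ⟨w, hw⟩ := hu1 n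
          exact ⟨w, by simp only [ContinuousLinearMap.coe_coe] at hw ⊢; rw [pow_succ', ContinuousLinearMap.mul_apply, hw]⟩
        have h3 : u n ∈ (S ^ (m+1)).range := rmono (m+1) n (by omega) (hu1 n)
        exact add_mem (sub_mem h1 h2) h3
      have hcalc : C (u n) - C (u m) = u m - (S (u m) - S (u n) + u n) := by
        rw [hCapp, hCapp]; abel
      rw [hcalc, ← norm_sub_rev, norm_sub_rev]
      exact hu3 m _ hz
    obtain ⟨n, hn⟩ := hstep
    have hall : ∀ k : ℕ, (S ^ (n + k)).range = (S ^ n).range := by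
      intro k
      induction k with
      | zero => rfl
      | succ k ih =>
        have : (S ^ (n + k + 1)).range = Submodule.map (S : X →ₗ[ℝ] X) ((S ^ (n+k)).range) :=
          hmapr (n + k)
        rw [show n + (k+1) = n + k + 1 by omega, this, ih, ← hmapr n, hn]
    refine ⟨n, fun m hm => ?_⟩
    obtain ⟨k, rfl⟩ := Nat.exists_eq_add_of_le hm
    exact hall k
  obtain ⟨a, ha⟩ := hka
  obtain ⟨b, hb⟩ := hra
  set p : ℕ := a + b + 1 with hpdef
  have hkp : ∀ m : ℕ, p ≤ m → (S ^ m).ker = (S ^ p).ker := by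
    intro m hm
    rw [ha m (by omega), ha p (by omega)]
  have hrp : ∀ m : ℕ, p ≤ m → (S ^ m).range = (S ^ p).range := by
    intro m hm
    rw [hb m (by omega), hb p (by omega)]
  haveI hKfd : FiniteDimensional ℝ ((S ^ p).ker) := kerfd p
  have hdisjKR : ∀ x, x ∈ ((S ^ p).ker) → x ∈ ((S ^ p).range) → x = 0 := by
    rintro x hxK ⟨y, rfl⟩
    have h2 : (S ^ (p + p)) y = 0 := by
      rw [pow_add, ContinuousLinearMap.mul_apply]
      exact hxK
    have : y ∈ (S ^ p).ker := by
      rw [← hkp (p + p) (by omega)]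
      exact h2
    exact this
  have hsupKR : ∀ x : X, ∃ k ∈ ((S ^ p).ker), ∃ r ∈ ((S ^ p).range), x = k + r := by
    intro x
    have : (S ^ p) x ∈ (S ^ (p + p)).range := by
      rw [hrp (p+p) (by omega)]
      exact ⟨x, rfl⟩
    obtain ⟨y, hy⟩ := this
    refine ⟨x - (S ^ p) y, ?_, (S ^ p) y, ⟨y, rfl⟩, by abel⟩
    show (S ^ p) (x - (S ^ p) y) = 0
    rw [map_sub, ← ContinuousLinearMap.mul_apply (S ^ p) (S ^ p), ← pow_add, show (S ^ (p + p)) y = (S ^ p) x from hy, sub_self]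
  have hmapSK : ∀ x ∈ ((S ^ p).ker), S x ∈ ((S ^ p).ker) := by
    intro x hx
    show (S ^ p) (S x) = 0
    rw [← ContinuousLinearMap.mul_apply, ← pow_succ, pow_succ', ContinuousLinearMap.mul_apply]
    have hx' : (S ^ p) x = 0 := hx
    rw [hx', map_zero]
  have hkerS_le : S.ker ≤ ((S ^ p).ker) := by
    have := kmono 1 p (by omega)
    rwa [pow_one] at this
  -- range S = map S ((S ^ p).ker) ⊔ ((S ^ p).range)
  have hrangeS : S.range = Submodule.map (S : X →ₗ[ℝ] X) ((S ^ p).ker) ⊔ ((S ^ p).range) := by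
    apply le_antisymm
    · rintro y ⟨x, rfl⟩
      obtain ⟨k, hk, r, hr, rfl⟩ := hsupKR x
      rw [map_add]
      apply Submodule.add_mem_sup (Submodule.mem_map_of_mem hk)
      obtain ⟨w, rfl⟩ := hr
      have : S ((S ^ p) w) ∈ (S ^ (p+1)).range :=
        ⟨w, by simp only [ContinuousLinearMap.coe_coe]; rw [pow_succ', ContinuousLinearMap.mul_apply]⟩
      rw [hrp (p+1) (by omega)] at this
      exact this
    · apply sup_le
      · rintro y ⟨x, _, rfl⟩
        exact ⟨x, rfl⟩
      · have h1 : ((S ^ p).range) ≤ (S ^ 1).range := rmono 1 p (by omega)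
        rwa [pow_one] at h1
  -- first rank-nullity: quotient by range S
  set g : ((S ^ p).ker) →ₗ[ℝ] (X ⧸ S.range) := (S.range).mkQ.comp ((S ^ p).ker).subtype with hg
  have hgsurj : Function.Surjective g := by
    intro y
    obtain ⟨x, rfl⟩ := Submodule.mkQ_surjective _ y
    obtain ⟨k, hk, r, hr, rfl⟩ := hsupKR x
    refine ⟨⟨k, hk⟩, ?_⟩
    show (S.range).mkQ (k : X) = (S.range).mkQ (k + r)
    rw [map_add]
    have : (S.range).mkQ r = 0 := by
      rw [Submodule.mkQ_apply, Submodule.Quotient.mk_eq_zero]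
      have h1 : ((S ^ p).range) ≤ S.range := by
        have := rmono 1 p (by omega)
        rwa [pow_one] at this
      exact h1 hr
    rw [this, add_zero]
  haveI hcofd : FiniteDimensional ℝ (X ⧸ S.range) := Module.Finite.of_surjective g hgsurj
  refine ⟨hcofd, ?_⟩
  -- kernel of g
  have hkerg : LinearMap.ker g = Submodule.comap ((S ^ p).ker).subtype (((S ^ p).ker) ⊓ S.range) := by
    ext x
    simp only [hg, LinearMap.mem_ker, LinearMap.comp_apply, Submodule.mkQ_apply,
      Submodule.Quotient.mk_eq_zero, Submodule.mem_comap, Submodule.subtype_apply,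
      Submodule.mem_inf]
    exact ⟨fun h => ⟨x.2, h⟩, fun h => h.2⟩
  have hinf : ((S ^ p).ker) ⊓ S.range = Submodule.map (S : X →ₗ[ℝ] X) ((S ^ p).ker) := by
    rw [hrangeS, inf_comm]
    rw [sup_inf_assoc_of_le _ (fun y hy => by
      obtain ⟨x, hx, rfl⟩ := hy
      exact hmapSK x hx)]
    have : ((S ^ p).range) ⊓ ((S ^ p).ker) = ⊥ := by
      rw [eq_bot_iff]
      intro x hx
      have := hdisjKR x hx.2 hx.1
      simp [this]
    rw [this, sup_bot_eq]
  have hrank1 : finrank ℝ (LinearMap.range g) + finrank ℝ (LinearMap.ker g)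
      = finrank ℝ ((S ^ p).ker) := LinearMap.finrank_range_add_finrank_ker g
  have hrgtop : finrank ℝ (LinearMap.range g) = finrank ℝ (X ⧸ S.range) := by
    rw [LinearMap.range_eq_top.2 hgsurj]
    exact finrank_top ℝ _
  have hkg : finrank ℝ (LinearMap.ker g) = finrank ℝ (Submodule.map (S : X →ₗ[ℝ] X) ((S ^ p).ker)) := by
    rw [hkerg, hinf]
    exact LinearEquiv.finrank_eq (Submodule.comapSubtypeEquivOfLe (by
      rw [← hinf]; exact inf_le_left))
  -- second rank-nullity: S restricted to ((S ^ p).ker)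
  set h : ((S ^ p).ker) →ₗ[ℝ] X := (S : X →ₗ[ℝ] X).domRestrict ((S ^ p).ker) with hh
  have hrangeh : LinearMap.range h = Submodule.map (S : X →ₗ[ℝ] X) ((S ^ p).ker) := by
    ext y
    constructor
    · rintro ⟨⟨x, hx⟩, rfl⟩
      exact ⟨x, hx, rfl⟩
    · rintro ⟨x, hx, rfl⟩
      exact ⟨⟨x, hx⟩, rfl⟩
  have hkerh : LinearMap.ker h = Submodule.comap ((S ^ p).ker).subtype (S.ker) := by
    ext x
    simp only [hh, LinearMap.mem_ker, LinearMap.domRestrict_apply, Submodule.mem_comap,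
      Submodule.subtype_apply]
  have hrank2 : finrank ℝ (LinearMap.range h) + finrank ℝ (LinearMap.ker h)
      = finrank ℝ ((S ^ p).ker) := LinearMap.finrank_range_add_finrank_ker h
  have hkh : finrank ℝ (LinearMap.ker h) = finrank ℝ (S.ker) := by
    rw [hkerh]
    exact LinearEquiv.finrank_eq (Submodule.comapSubtypeEquivOfLe hkerS_le)
  rw [hrangeh] at hrank2
  rw [hrgtop, hkg] at hrank1
  rw [hkh] at hrank2
  omega



end RieszTheory

section AdditivitySection

open Submodule



variable {U W X : Type*} [AddCommGroup U] [Module ℝ U] [AddCommGroup W] [Module ℝ W]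
  [AddCommGroup X] [Module ℝ X]

theorem fd_of_submodule_quotient' (p : Submodule ℝ U) [FiniteDimensional ℝ p]
    [FiniteDimensional ℝ (U ⧸ p)] : FiniteDimensional ℝ U := by
  haveI : IsNoetherian ℝ p := IsNoetherian.iff_fg.2 ‹_›
  haveI : IsNoetherian ℝ (U ⧸ p) := IsNoetherian.iff_fg.2 ‹_›
  haveI : IsNoetherian ℝ U := (isNoetherian_iff_submodule_quotient p).mpr ⟨‹_›, ‹_›⟩
  exact IsNoetherian.iff_fg.1 ‹_›

theorem fd_quotient_of_le' {A B : Submodule ℝ U} (h : A ≤ B) [FiniteDimensional ℝ (U ⧸ A)] :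
    FiniteDimensional ℝ (U ⧸ B) := by
  have hsurj : Function.Surjective (Submodule.mapQ A B LinearMap.id (fun x hx => h hx)) := by
    intro y
    obtain ⟨x, rfl⟩ := Submodule.mkQ_surjective B y
    exact ⟨Submodule.Quotient.mk x, rfl⟩
  exact Module.Finite.of_surjective _ hsurj

/-- Additivity of the Fredholm index for composition (purely algebraic). -/
theorem index_additive (t : U →ₗ[ℝ] W) (s : W →ₗ[ℝ] X)
    [FiniteDimensional ℝ (LinearMap.ker t)] [FiniteDimensional ℝ (W ⧸ LinearMap.range t)]
    [FiniteDimensional ℝ (LinearMap.ker s)] [FiniteDimensional ℝ (X ⧸ LinearMap.range s)] :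
    FiniteDimensional ℝ (LinearMap.ker (s ∘ₗ t)) ∧
    FiniteDimensional ℝ (X ⧸ LinearMap.range (s ∘ₗ t)) ∧
    (finrank ℝ (LinearMap.ker (s ∘ₗ t)) : ℤ) - finrank ℝ (X ⧸ LinearMap.range (s ∘ₗ t))
      = ((finrank ℝ (LinearMap.ker s) : ℤ) - finrank ℝ (X ⧸ LinearMap.range s))
        + ((finrank ℝ (LinearMap.ker t) : ℤ) - finrank ℝ (W ⧸ LinearMap.range t)) := by
  set A : Submodule ℝ W := LinearMap.range t with hA
  set B : Submodule ℝ W := LinearMap.ker s with hB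
  -- Step 1: the kernel of the composition
  set g₁ : LinearMap.ker (s ∘ₗ t) →ₗ[ℝ] W := t.domRestrict (LinearMap.ker (s ∘ₗ t)) with hg₁
  have hkerg₁ : LinearMap.ker g₁ = Submodule.comap (LinearMap.ker (s ∘ₗ t)).subtype
      (LinearMap.ker t) := by
    ext x
    simp [hg₁]
  have hrangeg₁ : LinearMap.range g₁ = A ⊓ B := by
    ext y
    constructor
    · rintro ⟨⟨x, hx⟩, rfl⟩
      exact ⟨⟨x, rfl⟩, hx⟩
    · rintro ⟨⟨x, rfl⟩, hyB⟩
      exact ⟨⟨x, hyB⟩, rfl⟩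
  have hkt_le : LinearMap.ker t ≤ LinearMap.ker (s ∘ₗ t) := by
    intro x hx
    show s (t x) = 0
    rw [show t x = 0 from hx, map_zero]
  haveI fdkg₁ : FiniteDimensional ℝ (LinearMap.ker g₁) := by
    rw [hkerg₁]
    exact (Submodule.comapSubtypeEquivOfLe hkt_le).symm.finiteDimensional
  haveI fdrg₁ : FiniteDimensional ℝ (LinearMap.range g₁) := by
    rw [hrangeg₁]
    exact Submodule.finiteDimensional_of_le inf_le_right
  haveI fdk : FiniteDimensional ℝ (LinearMap.ker (s ∘ₗ t)) := by
    haveI : FiniteDimensional ℝ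
        ((LinearMap.ker (s ∘ₗ t) : Type _) ⧸ LinearMap.ker g₁) :=
      (g₁.quotKerEquivRange).symm.finiteDimensional
    exact fd_of_submodule_quotient' (LinearMap.ker g₁)
  have hrank1 : finrank ℝ (LinearMap.range g₁) + finrank ℝ (LinearMap.ker g₁)
      = finrank ℝ (LinearMap.ker (s ∘ₗ t)) := LinearMap.finrank_range_add_finrank_ker g₁
  have e1 : finrank ℝ (LinearMap.ker g₁) = finrank ℝ (LinearMap.ker t) := by
    rw [hkerg₁]
    exact (Submodule.comapSubtypeEquivOfLe hkt_le).finrank_eq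
  have e2 : finrank ℝ (LinearMap.range g₁) = finrank ℝ (A ⊓ B : Submodule ℝ W) := by
    rw [hrangeg₁]
  -- Step 2: B-decomposition
  set g₂ : B →ₗ[ℝ] (W ⧸ A) := A.mkQ.domRestrict B with hg₂
  have hkerg₂ : LinearMap.ker g₂ = Submodule.comap B.subtype (A ⊓ B) := by
    ext x
    simp only [hg₂, LinearMap.mem_ker, LinearMap.domRestrict_apply, Submodule.mkQ_apply,
      Submodule.Quotient.mk_eq_zero, Submodule.mem_comap, Submodule.subtype_apply,
      Submodule.mem_inf]
    exact ⟨fun h => ⟨h, x.2⟩, fun h => h.1⟩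
  have hrank2 : finrank ℝ (LinearMap.range g₂) + finrank ℝ (LinearMap.ker g₂)
      = finrank ℝ B := LinearMap.finrank_range_add_finrank_ker g₂
  have e3 : finrank ℝ (LinearMap.ker g₂) = finrank ℝ (A ⊓ B : Submodule ℝ W) := by
    rw [hkerg₂]
    exact (Submodule.comapSubtypeEquivOfLe inf_le_right).finrank_eq
  have hmapAB : Submodule.map A.mkQ (A ⊔ B) = LinearMap.range g₂ := by
    rw [Submodule.map_sup, LinearMap.range_domRestrict]
    have : Submodule.map A.mkQ A = ⊥ := by
      rw [eq_bot_iff]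
      rintro y ⟨x, hx, rfl⟩
      rw [Submodule.mem_bot, Submodule.mkQ_apply, Submodule.Quotient.mk_eq_zero]
      exact hx
    rw [this, bot_sup_eq]
  have hq2 : ((W ⧸ A) ⧸ (LinearMap.range g₂)) ≃ₗ[ℝ] W ⧸ (A ⊔ B) := by
    rw [← hmapAB]
    exact Submodule.quotientQuotientEquivQuotient A (A ⊔ B) le_sup_left
  haveI fdWA : FiniteDimensional ℝ (W ⧸ (A ⊔ B)) := fd_quotient_of_le' le_sup_left
  have hrank3 : finrank ℝ ((W ⧸ A) ⧸ (LinearMap.range g₂)) + finrank ℝ (LinearMap.range g₂)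
      = finrank ℝ (W ⧸ A) := Submodule.finrank_quotient_add_finrank _
  have e4 : finrank ℝ ((W ⧸ A) ⧸ (LinearMap.range g₂)) = finrank ℝ (W ⧸ (A ⊔ B)) :=
    hq2.finrank_eq
  -- Step 3: cokernel of the composition
  have hst : LinearMap.range (s ∘ₗ t) = Submodule.map s A := by
    rw [hA, ← LinearMap.range_comp]
  set g₄ : W →ₗ[ℝ] (X ⧸ Submodule.map s A) := (Submodule.map s A).mkQ ∘ₗ s with hg₄
  have hkerg₄ : LinearMap.ker g₄ = A ⊔ B := by
    ext x
    simp only [hg₄, LinearMap.mem_ker, LinearMap.comp_apply, Submodule.mkQ_apply,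
      Submodule.Quotient.mk_eq_zero]
    constructor
    · rintro ⟨a, haA, hax⟩
      have : x = a + (x - a) := by abel
      rw [this]
      apply Submodule.add_mem_sup haA
      show s (x - a) = 0
      rw [map_sub, hax, sub_self]
    · intro hx
      rw [Submodule.mem_sup] at hx
      obtain ⟨a, haA, b, hbB, rfl⟩ := hx
      refine ⟨a, haA, ?_⟩
      rw [map_add, show s b = 0 from hbB, add_zero]
  have e5 : (W ⧸ (A ⊔ B)) ≃ₗ[ℝ] LinearMap.range g₄ :=
    (Submodule.quotEquivOfEq _ _ hkerg₄.symm).trans g₄.quotKerEquivRange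
  haveI fdrg₄ : FiniteDimensional ℝ (LinearMap.range g₄) := e5.finiteDimensional
  have hmaprg₄ : LinearMap.range g₄ = Submodule.map (Submodule.map s A).mkQ
      (LinearMap.range s) := by
    rw [hg₄, LinearMap.range_comp]
  have hle_ms : Submodule.map s A ≤ LinearMap.range s := by
    rintro y ⟨x, _, rfl⟩
    exact ⟨x, rfl⟩
  have hq4 : ((X ⧸ Submodule.map s A) ⧸ (LinearMap.range g₄)) ≃ₗ[ℝ] X ⧸ LinearMap.range s := by
    rw [hmaprg₄]
    exact Submodule.quotientQuotientEquivQuotient (Submodule.map s A) (LinearMap.range s) hle_ms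
  haveI fdQq : FiniteDimensional ℝ ((X ⧸ Submodule.map s A) ⧸ (LinearMap.range g₄)) :=
    hq4.symm.finiteDimensional
  haveI fdQ : FiniteDimensional ℝ (X ⧸ Submodule.map s A) :=
    fd_of_submodule_quotient' (LinearMap.range g₄)
  haveI fdcok : FiniteDimensional ℝ (X ⧸ LinearMap.range (s ∘ₗ t)) := by
    rw [hst]; exact fdQ
  have hrank4 : finrank ℝ ((X ⧸ Submodule.map s A) ⧸ (LinearMap.range g₄))
      + finrank ℝ (LinearMap.range g₄) = finrank ℝ (X ⧸ Submodule.map s A) :=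
    Submodule.finrank_quotient_add_finrank _
  have e6 : finrank ℝ ((X ⧸ Submodule.map s A) ⧸ (LinearMap.range g₄))
      = finrank ℝ (X ⧸ LinearMap.range s) := hq4.finrank_eq
  have e7 : finrank ℝ (LinearMap.range g₄) = finrank ℝ (W ⧸ (A ⊔ B)) := e5.symm.finrank_eq
  have e8 : finrank ℝ (X ⧸ LinearMap.range (s ∘ₗ t)) = finrank ℝ (X ⧸ Submodule.map s A) := by
    rw [hst]
  refine ⟨fdk, fdcok, ?_⟩
  have hBk : finrank ℝ B = finrank ℝ (LinearMap.ker s) := by rw [hB]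
  have hAq : finrank ℝ (W ⧸ A) = finrank ℝ (W ⧸ LinearMap.range t) := by rw [hA]
  omega




end AdditivitySection

end AuxiliaryFredholmLemmas

section MainTheorem

open Submodule

set_option maxHeartbeats 1000000

/-- Stability of Fredholmness and of the index under compact perturbations. -/
theorem fredholm_add_compact [CompleteSpace V] [CompleteSpace W]
    (T K : V →L[ℝ] W) (hT : IsFredholm T) (hK : IsCompactOperator (⇑K)) :
    IsFredholm (T + K) ∧ fredholmIndex (T + K) = fredholmIndex T := by
  obtain ⟨hT1, hT2, hT3⟩ := hT
  haveI := hT1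
  haveI := hT3
  -- continuous projection onto the kernel
  obtain ⟨π, hπ⟩ := Submodule.ClosedComplemented.of_finiteDimensional (T.ker)
  -- continuous projection onto the range
  obtain ⟨ρ, hρ⟩ := Submodule.ClosedComplemented.of_quotient_finiteDimensional hT2
  have hV₁closed : IsClosed ((π.ker : Submodule ℝ V) : Set V) :=
    ContinuousLinearMap.isClosed_ker π
  haveI : CompleteSpace (π.ker) := hV₁closed.completeSpace_coe
  haveI : CompleteSpace (T.range) := hT2.completeSpace_coe
  have hmemV₁ : ∀ x : V, x - ↑(π x) ∈ π.ker := by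
    intro x
    have h2 : π ((π x : V)) = π x := hπ (π x)
    show π (x - (π x : V)) = 0
    rw [map_sub, h2, sub_self]
  -- T restricted to a complement of the kernel, as an iso onto the range
  set T₁ : (π.ker : Submodule ℝ V) →L[ℝ] (T.range : Submodule ℝ W) :=
    ContinuousLinearMap.codRestrict (T.comp (π.ker).subtypeL) _
      (fun x => ⟨(x : V), rfl⟩) with hT₁def
  have hT₁inj : T₁.ker = ⊥ := by
    rw [eq_bot_iff]
    rintro ⟨x, hxπ⟩ hx
    have hxT : T x = 0 := congrArg Subtype.val hx
    have h1 : π x = ⟨x, hxT⟩ := hπ ⟨x, hxT⟩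
    have h2 : π x = 0 := hxπ
    have : (⟨x, hxT⟩ : T.ker) = 0 := h1 ▸ h2
    have hx0 : x = 0 := congrArg Subtype.val this
    exact Submodule.mem_bot _ |>.mpr (Subtype.ext hx0)
  have hT₁surj : T₁.range = ⊤ := by
    rw [eq_top_iff]
    rintro ⟨y, x, rfl⟩ -
    refine ⟨⟨x - ↑(π x), hmemV₁ x⟩, ?_⟩
    apply Subtype.ext
    show T (x - ↑(π x)) = T x
    rw [map_sub, show T ↑(π x) = 0 from (π x).2, sub_zero]
  set E := ContinuousLinearEquiv.ofBijective T₁ hT₁inj hT₁surj with hEdef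
  have hEapp : ∀ v, E v = T₁ v := fun v => rfl
  -- the pseudo-inverse
  set S : W →L[ℝ] V := (π.ker).subtypeL.comp
    (((E.symm : (T.range : Submodule ℝ W) ≃L[ℝ] (π.ker : Submodule ℝ V)) :
        (T.range : Submodule ℝ W) →L[ℝ] (π.ker : Submodule ℝ V)).comp ρ)
    with hSdef
  have hSapp : ∀ y, S y = ↑(E.symm (ρ y)) := fun y => rfl
  have hST : ∀ x, S (T x) = x - ↑(π x) := by
    intro x
    have hρT : ρ (T x) = ⟨T x, LinearMap.mem_range_self (T : V →ₗ[ℝ] W) x⟩ := hρ ⟨T x, _⟩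
    have hE : E ⟨x - ↑(π x), hmemV₁ x⟩ = ⟨T x, LinearMap.mem_range_self (T : V →ₗ[ℝ] W) x⟩ := by
      rw [hEapp]
      apply Subtype.ext
      show T (x - ↑(π x)) = T x
      rw [map_sub, show T ↑(π x) = 0 from (π x).2, sub_zero]
    rw [hSapp, hρT, E.symm_apply_eq.mpr hE.symm]
  have hTS : ∀ y, T (S y) = ↑(ρ y) := by
    intro y
    have : T (S y) = ↑(T₁ (E.symm (ρ y))) := rfl
    rw [this, ← hEapp, E.apply_symm_apply]
  -- kernel and cokernel of S
  have hkerS : S.ker = ρ.ker := by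
    ext y
    constructor
    · intro hy
      have h0 : (↑(E.symm (ρ y)) : V) = 0 := hy
      have h1 : E.symm (ρ y) = 0 := Subtype.ext h0
      have := congrArg E h1
      rw [E.apply_symm_apply, map_zero] at this
      exact this
    · intro hy
      show S y = 0
      rw [hSapp, show ρ y = 0 from hy, map_zero]
      rfl
  have hcomplρ : IsCompl (T.range) (ρ.ker) := by
    constructor
    · rw [disjoint_iff, eq_bot_iff]
      rintro x ⟨hx1, hx2⟩
      have h1 : ρ x = ⟨x, hx1⟩ := hρ ⟨x, hx1⟩
      have h2 : ρ x = 0 := hx2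
      have : (⟨x, hx1⟩ : T.range) = 0 := h1 ▸ h2
      exact (Submodule.mem_bot _).mpr (congrArg Subtype.val this)
    · rw [codisjoint_iff, eq_top_iff]
      rintro x -
      have hmem : x - ↑(ρ x) ∈ ρ.ker := by
        show ρ (x - ↑(ρ x)) = 0
        rw [map_sub, hρ (ρ x), sub_self]
      have : x = ↑(ρ x) + (x - ↑(ρ x)) := by abel
      rw [this]
      exact Submodule.add_mem_sup (ρ x).2 hmem
  have ekerρ : (W ⧸ T.range) ≃ₗ[ℝ] ρ.ker :=
    Submodule.quotientEquivOfIsCompl _ _ hcomplρ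
  haveI fdkerρ : FiniteDimensional ℝ (ρ.ker) := ekerρ.finiteDimensional
  haveI fdkerS : FiniteDimensional ℝ (S.ker) := by rw [hkerS]; exact fdkerρ
  have hrankkerS : finrank ℝ (S.ker) = finrank ℝ (W ⧸ T.range) := by
    rw [hkerS, ← ekerρ.finrank_eq]
  have hrangeS : S.range = π.ker := by
    apply le_antisymm
    · rintro y ⟨x, rfl⟩
      exact (E.symm (ρ x)).2
    · intro x hx
      refine ⟨↑(E ⟨x, hx⟩), ?_⟩
      show S ↑(E ⟨x, hx⟩) = x
      rw [hSapp, hρ (E ⟨x, hx⟩), E.symm_apply_apply]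
  have hcomplπ : IsCompl (π.ker : Submodule ℝ V) (T.ker) := by
    constructor
    · rw [disjoint_iff, eq_bot_iff]
      rintro x ⟨hx1, hx2⟩
      have h1 : π x = ⟨x, hx2⟩ := hπ ⟨x, hx2⟩
      have h2 : π x = 0 := hx1
      have : (⟨x, hx2⟩ : T.ker) = 0 := h1 ▸ h2
      exact (Submodule.mem_bot _).mpr (congrArg Subtype.val this)
    · rw [codisjoint_iff, eq_top_iff]
      rintro x -
      have : x = (x - ↑(π x)) + ↑(π x) := by abel
      rw [this]
      exact Submodule.add_mem_sup (hmemV₁ x) (π x).2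
  have ecokS : (V ⧸ S.range) ≃ₗ[ℝ] T.ker := by
    rw [hrangeS]
    exact Submodule.quotientEquivOfIsCompl _ _ hcomplπ
  haveI fdcokS : FiniteDimensional ℝ (V ⧸ S.range) := ecokS.symm.finiteDimensional
  have hrankcokS : finrank ℝ (V ⧸ S.range) = finrank ℝ (T.ker) :=
    ecokS.finrank_eq
  -- the key argument, for an arbitrary compact perturbation
  have key : ∀ K' : V →L[ℝ] W, IsCompactOperator ⇑K' →
      IsFredholm (T + K') ∧
        fredholmIndex (T + K') =
          (finrank ℝ (T.ker) : ℤ) - finrank ℝ (W ⧸ T.range) := by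
    intro K' hK'
    -- left compact operator
    set C₁ : V →L[ℝ] V := S.comp K' - (T.ker).subtypeL.comp π with hC₁def
    have hC₁ : IsCompactOperator ⇑C₁ := by
      have c1 : IsCompactOperator ⇑(S.comp K') := by
        have : ⇑(S.comp K') = ⇑S ∘ ⇑K' := rfl
        rw [this]
        exact hK'.continuous_comp S.continuous
      have c2 : IsCompactOperator ⇑((T.ker).subtypeL.comp π) := by
        haveI : FiniteDimensional ℝ
            ((((T.ker).subtypeL.comp π : V →L[ℝ] V) : V →ₗ[ℝ] V).range) := by
          apply Submodule.finiteDimensional_of_le (S₂ := T.ker)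
          rintro y ⟨x, rfl⟩
          exact (π x).2
        exact isCompactOperator_of_fd_range _
      have : ⇑C₁ = ⇑(S.comp K') - ⇑((T.ker).subtypeL.comp π) := by
        ext x; simp [hC₁def, ContinuousLinearMap.sub_apply]
      rw [this]
      exact c1.sub c2
    have hid1 : S.comp (T + K') = 1 + C₁ := by
      ext x
      show S (T x + K' x) = x + C₁ x
      rw [map_add, hST]
      show x - ↑(π x) + S (K' x) = x + (S (K' x) - ↑(π x))
      abel
    -- right compact operator
    set C₂ : W →L[ℝ] W := K'.comp S - (1 - (T.range).subtypeL.comp ρ) with hC₂def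
    have hC₂ : IsCompactOperator ⇑C₂ := by
      have c3 : IsCompactOperator ⇑(K'.comp S) := by
        have : ⇑(K'.comp S) = ⇑K' ∘ ⇑S := rfl
        rw [this]
        exact hK'.comp_clm S
      have c4 : IsCompactOperator ⇑(1 - (T.range).subtypeL.comp ρ) := by
        haveI : FiniteDimensional ℝ
            (((1 - (T.range).subtypeL.comp ρ : W →L[ℝ] W) : W →ₗ[ℝ] W).range) := by
          apply Submodule.finiteDimensional_of_le (S₂ := ρ.ker)
          rintro y ⟨x, rfl⟩
          show ρ ((1 - (T.range).subtypeL.comp ρ) x) = 0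
          have : (1 - (T.range).subtypeL.comp ρ) x = x - ↑(ρ x) := rfl
          rw [this, map_sub, hρ (ρ x), sub_self]
        exact isCompactOperator_of_fd_range _
      have : ⇑C₂ = ⇑(K'.comp S) - ⇑(1 - (T.range).subtypeL.comp ρ) := by
        ext x; simp [hC₂def, ContinuousLinearMap.sub_apply]
      rw [this]
      exact c3.sub c4
    have hid2 : (T + K').comp S = 1 + C₂ := by
      ext y
      show T (S y) + K' (S y) = y + C₂ y
      rw [hTS]
      show ↑(ρ y) + K' (S y) = y + (K' (S y) - (y - ↑(ρ y)))
      abel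
    -- Fredholmness of T + K'
    haveI fdker1 : FiniteDimensional ℝ (((1 : V →L[ℝ] V) + C₁).ker) :=
      riesz_ker_fd C₁ hC₁
    haveI fdkerTK : FiniteDimensional ℝ ((T + K').ker) := by
      apply Submodule.finiteDimensional_of_le (S₂ := ((1 : V →L[ℝ] V) + C₁).ker)
      rw [← hid1]
      intro x hx
      show S ((T + K') x) = 0
      rw [show (T + K') x = 0 from hx, map_zero]
    have hrcl2 : IsClosed ((((1 : W →L[ℝ] W) + C₂).range : Submodule ℝ W) : Set W) :=
      riesz_range_closed C₂ hC₂
    haveI fdcok2 : FiniteDimensional ℝ (W ⧸ ((1 : W →L[ℝ] W) + C₂).range) :=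
      (riesz_coker C₂ hC₂).1
    have hrange_ge : ((1 : W →L[ℝ] W) + C₂).range ≤ (T + K').range := by
      rw [← hid2]
      rintro y ⟨x, rfl⟩
      exact ⟨S x, rfl⟩
    obtain ⟨hclosedTK, fdcokTK⟩ := closed_fincodim_of_le hrange_ge hrcl2
    haveI := fdcokTK
    refine ⟨⟨fdkerTK, hclosedTK, fdcokTK⟩, ?_⟩
    -- index computation
    haveI fdt1 : FiniteDimensional ℝ (LinearMap.ker ((T + K' : V →L[ℝ] W) : V →ₗ[ℝ] W)) :=
      fdkerTK
    haveI fdt2 : FiniteDimensional ℝ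
        (W ⧸ LinearMap.range ((T + K' : V →L[ℝ] W) : V →ₗ[ℝ] W)) := fdcokTK
    haveI fds1 : FiniteDimensional ℝ (LinearMap.ker ((S : W →L[ℝ] V) : W →ₗ[ℝ] V)) := fdkerS
    haveI fds2 : FiniteDimensional ℝ
        (V ⧸ LinearMap.range ((S : W →L[ℝ] V) : W →ₗ[ℝ] V)) := fdcokS
    obtain ⟨-, -, hadd⟩ := index_additive
      ((T + K' : V →L[ℝ] W) : V →ₗ[ℝ] W) ((S : W →L[ℝ] V) : W →ₗ[ℝ] V)
    have hco : ((S : W →L[ℝ] V) : W →ₗ[ℝ] V) ∘ₗ ((T + K' : V →L[ℝ] W) : V →ₗ[ℝ] W)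
        = ((S.comp (T + K') : V →L[ℝ] V) : V →ₗ[ℝ] V) :=
      (ContinuousLinearMap.toLinearMap_comp S (T + K')).symm
    rw [hco, hid1] at hadd
    have hriesz := (riesz_coker C₁ hC₁).2
    have hz : (finrank ℝ (LinearMap.ker (((1 : V →L[ℝ] V) + C₁ : V →L[ℝ] V) : V →ₗ[ℝ] V)) : ℤ)
        - finrank ℝ (V ⧸ LinearMap.range (((1 : V →L[ℝ] V) + C₁ : V →L[ℝ] V) : V →ₗ[ℝ] V))
        = 0 := by
      have h1 : LinearMap.ker (((1 : V →L[ℝ] V) + C₁ : V →L[ℝ] V) : V →ₗ[ℝ] V)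
          = ((1 : V →L[ℝ] V) + C₁).ker := rfl
      have h2 : LinearMap.range (((1 : V →L[ℝ] V) + C₁ : V →L[ℝ] V) : V →ₗ[ℝ] V)
          = ((1 : V →L[ℝ] V) + C₁).range := rfl
      rw [h1, h2, hriesz]
      omega
    rw [hz] at hadd
    unfold fredholmIndex
    have hks : finrank ℝ (LinearMap.ker ((S : W →L[ℝ] V) : W →ₗ[ℝ] V))
        = finrank ℝ (W ⧸ T.range) := hrankkerS
    have hcs : finrank ℝ (V ⧸ LinearMap.range ((S : W →L[ℝ] V) : W →ₗ[ℝ] V))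
        = finrank ℝ (T.ker) := hrankcokS
    rw [hks, hcs] at hadd
    have hkt : LinearMap.ker ((T + K' : V →L[ℝ] W) : V →ₗ[ℝ] W)
        = (T + K').ker := rfl
    have hrt : LinearMap.range ((T + K' : V →L[ℝ] W) : V →ₗ[ℝ] W)
        = (T + K').range := rfl
    rw [hkt, hrt] at hadd
    omega
  obtain ⟨hf, hidx⟩ := key K hK
  refine ⟨hf, ?_⟩
  rw [hidx]
  rfl


end MainTheorem
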